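/- If ψ has a 1-in-3 satisfying assignment, then there exists a graph H with exactly 2m+1 vertices and 5m edges that appears as a 1-subdivision in G(ψ); in particular, G(ψ) has a ½-shallow topological minor of density 5m/(2m+1). -/

import Mathlib

/-- The density `‖G‖/|G|` of a finite simple graph. -/
noncomputable def graphDensity {V : Type*} (G : SimpleGraph V) : ℚ :=
  (G.edgeSet.ncard : ℚ) / (Nat.card V : ℚ)

/-- A model of a topological minor `H` inside `G`: an injective nail map together
with, for every edge of `H`, a path in `G` between the corresponding nails; the
paths are pairwise internally disjoint and their internal vertices avoid the nails. -/
structure SubdivModel {VH VG : Type*} (H : SimpleGraph VH) (G : SimpleGraph VG) where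
  nail : VH → VG
  nail_inj : Function.Injective nail
  path : ∀ u v : VH, H.Adj u v → G.Walk (nail u) (nail v)
  path_isPath : ∀ u v (h : H.Adj u v), (path u v h).IsPath
  path_symm : ∀ u v (h : H.Adj u v), path v u h.symm = (path u v h).reverse
  internal_not_nail : ∀ u v (h : H.Adj u v), ∀ w ∈ (path u v h).support,
    w ≠ nail u → w ≠ nail v → ∀ x, w ≠ nail x
  paths_disjoint : ∀ u v (h : H.Adj u v), ∀ u' v' (h' : H.Adj u' v'),
    s(u, v) ≠ s(u', v') → ∀ w, w ∈ (path u v h).support → w ∈ (path u' v' h').support →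
      (w = nail u ∨ w = nail v) ∧ (w = nail u' ∨ w = nail v')

/-- `H` appears as a `k`-subdivision in `G`: the graph obtained from `H` by
subdividing every edge exactly `k` times is isomorphic to a subgraph of `G`,
i.e. there is a model all of whose paths have length exactly `k + 1`. -/
def AppearsAsSubdivision (k : ℕ) {VH VG : Type*} (H : SimpleGraph VH) (G : SimpleGraph VG) :
    Prop :=
  ∃ M : SubdivModel H G, ∀ u v (h : H.Adj u v), (M.path u v h).length = k + 1

/-- `H` is an `r/2`-shallow topological minor of `G`: a graph obtained from `H` by
subdividing each edge at most `r` times is isomorphic to a subgraph of `G`,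
i.e. there is a model all of whose paths have length at most `r + 1`. -/
def IsShallowTopMinor (r : ℕ) {VH VG : Type*} (H : SimpleGraph VH) (G : SimpleGraph VG) :
    Prop :=
  ∃ M : SubdivModel H G, ∀ u v (h : H.Adj u v), (M.path u v h).length ≤ r + 1

/-- A CNF formula with `m` clauses over `p` (positive) variables, each clause consisting
of exactly three distinct positive literals and every variable occurring in at least
three clauses. -/
structure PosCnf (p m : ℕ) where
  clause : Fin m → Finset (Fin p)
  card_eq : ∀ i, (clause i).card = 3
  freq : ∀ v : Fin p, 3 ≤ (Finset.univ.filter (fun i => v ∈ clause i)).card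

/-- `σ` is a 1-in-3 satisfying assignment for `ψ`: every clause contains exactly one
true variable. -/
def PosCnf.Sat1in3 {p m : ℕ} (ψ : PosCnf p m) (σ : Fin p → Bool) : Prop :=
  ∀ i, ((ψ.clause i).filter (fun v => σ v = true)).card = 1

/-- Occurrences of variables in clauses of `ψ`. -/
def PosCnf.Occ {p m : ℕ} (ψ : PosCnf p m) : Type :=
  {q : Fin m × Fin p // q.2 ∈ ψ.clause q.1}

/-- `succ` arranges, for each variable, its occurrences into a single cycle: it is a
permutation of occurrences preserving the variable whose restriction to the
occurrences of each variable is one cycle. -/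
def CycleData {p m : ℕ} (ψ : PosCnf p m) (succ : Equiv.Perm ψ.Occ) : Prop :=
  (∀ o : ψ.Occ, (succ o).1.2 = o.1.2) ∧
  (∀ o o' : ψ.Occ, o.1.2 = o'.1.2 → succ.SameCycle o o')

/-- Vertices of the graph `G(ψ)`: `none` is the apex `a`; `some (inl o)` is the white
vertex for the occurrence `o`; `some (inr (inl i))` is the gray vertex of clause `i`;
`some (inr (inr (o, true)))` is the black vertex subdividing the apex–white(`o`) edge;
`some (inr (inr (o, false)))` is the black vertex subdividing the cycle edge from
white(`o`) to white(`succ o`). -/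
def GPsiV {p m : ℕ} (ψ : PosCnf p m) : Type :=
  Option (ψ.Occ ⊕ Fin m ⊕ ψ.Occ × Bool)

/-- The graph `G(ψ)` of the reduction (for `r` odd, `r = 1`): variable cycles `D_i`
(one white vertex per occurrence), an apex `a` joined to all white vertices, one gray
vertex per clause joined to the three corresponding white vertices, and every cycle
edge and apex edge subdivided exactly once by a black vertex. -/
def GPsi {p m : ℕ} (ψ : PosCnf p m) (succ : Equiv.Perm ψ.Occ) : SimpleGraph (GPsiV ψ) :=
  SimpleGraph.fromRel (fun x y =>
    -- apex  — black subdividing an apex edge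
    (∃ o : ψ.Occ, x = none ∧ y = some (Sum.inr (Sum.inr (o, true)))) ∨
    -- white(o) — black subdividing the apex edge at o
    (∃ o : ψ.Occ, x = some (Sum.inl o) ∧ y = some (Sum.inr (Sum.inr (o, true)))) ∨
    -- white(o) — black subdividing the cycle edge (o, succ o)
    (∃ o : ψ.Occ, x = some (Sum.inl o) ∧ y = some (Sum.inr (Sum.inr (o, false)))) ∨
    -- white(succ o) — black subdividing the cycle edge (o, succ o)
    (∃ o : ψ.Occ, x = some (Sum.inl (succ o)) ∧ y = some (Sum.inr (Sum.inr (o, false)))) ∨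
    -- white(o) — gray vertex of the clause of o
    (∃ o : ψ.Occ, x = some (Sum.inl o) ∧ y = some (Sum.inr (Sum.inl o.1.1))))

/-! ### Auxiliary constructions -/

namespace Stmt4Aux

open SimpleGraph Sum

variable {p m : ℕ} (ψ : PosCnf p m)

instance occDecEq : DecidableEq ψ.Occ :=
  show DecidableEq {q : Fin m × Fin p // q.2 ∈ ψ.clause q.1} from inferInstance

instance occFintype : Fintype ψ.Occ :=
  show Fintype {q : Fin m × Fin p // q.2 ∈ ψ.clause q.1} from inferInstance

variable (succ : Equiv.Perm ψ.Occ)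

/-- Each variable has at least 3 occurrences, all on one `succ`-cycle, hence no fixed
points and no 2-cycles. -/
lemma no_short (hsucc : CycleData ψ succ) (o : ψ.Occ) :
    succ o ≠ o ∧ succ (succ o) ≠ o := by
  have hfreq := ψ.freq o.1.2
  constructor
  · intro hfix
    have key : ∀ o' : ψ.Occ, o'.1.2 = o.1.2 → o' = o := by
      intro o' ho'
      obtain ⟨k, _, hke⟩ := (hsucc.2 o o' ho'.symm).exists_pow_eq'
      have hall : ∀ n : ℕ, (succ ^ n) o = o := by
        intro n
        induction n with
        | zero => rfl
        | succ n ih => rw [pow_succ, Equiv.Perm.mul_apply, hfix, ih]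
      rw [← hke, hall]
    have sub : (Finset.univ.filter (fun i => o.1.2 ∈ ψ.clause i)) ⊆ {o.1.1} := by
      intro i hi
      have hi' := (Finset.mem_filter.mp hi).2
      have := key ⟨(i, o.1.2), hi'⟩ rfl
      have : i = o.1.1 := congrArg (fun x => x.1.1) this
      simp [this]
    have := Finset.card_le_card sub
    simp at this
    omega
  · intro hfix
    have key : ∀ o' : ψ.Occ, o'.1.2 = o.1.2 → o' = o ∨ o' = succ o := by
      intro o' ho'
      obtain ⟨k, _, hke⟩ := (hsucc.2 o o' ho'.symm).exists_pow_eq'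
      have hall : ∀ n : ℕ, (succ ^ n) o = o ∨ (succ ^ n) o = succ o := by
        intro n
        induction n with
        | zero => exact Or.inl rfl
        | succ n ih =>
          rcases ih with h | h
          · right; rw [pow_succ', Equiv.Perm.mul_apply, h]
          · left; rw [pow_succ', Equiv.Perm.mul_apply, h, hfix]
      rw [← hke]; exact hall k
    have sub : (Finset.univ.filter (fun i => o.1.2 ∈ ψ.clause i)) ⊆
        {o.1.1, (succ o).1.1} := by
      intro i hi
      have hi' := (Finset.mem_filter.mp hi).2
      rcases key ⟨(i, o.1.2), hi'⟩ rfl with h | h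
      · have : i = o.1.1 := congrArg (fun x => x.1.1) h
        simp [this]
      · have : i = (succ o).1.1 := congrArg (fun x => x.1.1) h
        simp [this]
    have h2 := Finset.card_le_card sub
    have h3 := Finset.card_insert_le o.1.1 ({(succ o).1.1} : Finset (Fin m))
    simp at h3
    omega


variable (σ : Fin p → Bool)

/-- The white vertices of false occurrences: the nails of `H` besides the apex. -/
abbrev FO : Type := {o : ψ.Occ // σ o.1.2 = false}

/-- The set of false variables of a clause. -/
def falseSet (i : Fin m) : Finset (Fin p) :=
  (ψ.clause i).filter (fun v => σ v = false)

lemma falseSet_card (hσ : ψ.Sat1in3 σ) (i : Fin m) : (falseSet ψ σ i).card = 2 := by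
  have h1 := hσ i
  have h3 := ψ.card_eq i
  have h2 := Finset.card_filter_add_card_filter_not
    (s := ψ.clause i) (p := fun v => σ v = true)
  have he : (ψ.clause i).filter (fun v => ¬ (σ v = true)) = falseSet ψ σ i := by
    apply Finset.filter_congr
    intro v _
    simp [Bool.not_eq_true]
  rw [he] at h2
  omega

/-- The two false variables of clause `i`. -/
noncomputable def fv1 (hσ : ψ.Sat1in3 σ) (i : Fin m) : Fin p :=
  (Finset.card_eq_two.mp (falseSet_card ψ σ hσ i)).choose

noncomputable def fv2 (hσ : ψ.Sat1in3 σ) (i : Fin m) : Fin p :=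
  (Finset.card_eq_two.mp (falseSet_card ψ σ hσ i)).choose_spec.choose

lemma fv_spec (hσ : ψ.Sat1in3 σ) (i : Fin m) :
    fv1 ψ σ hσ i ≠ fv2 ψ σ hσ i ∧
      falseSet ψ σ i = {fv1 ψ σ hσ i, fv2 ψ σ hσ i} :=
  (Finset.card_eq_two.mp (falseSet_card ψ σ hσ i)).choose_spec.choose_spec

lemma fv1_mem (hσ : ψ.Sat1in3 σ) (i : Fin m) :
    fv1 ψ σ hσ i ∈ ψ.clause i ∧ σ (fv1 ψ σ hσ i) = false := by
  have h : fv1 ψ σ hσ i ∈ falseSet ψ σ i := by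
    rw [(fv_spec ψ σ hσ i).2]; simp
  exact Finset.mem_filter.mp h

lemma fv2_mem (hσ : ψ.Sat1in3 σ) (i : Fin m) :
    fv2 ψ σ hσ i ∈ ψ.clause i ∧ σ (fv2 ψ σ hσ i) = false := by
  have h : fv2 ψ σ hσ i ∈ falseSet ψ σ i := by
    rw [(fv_spec ψ σ hσ i).2]; simp
  exact Finset.mem_filter.mp h

/-- The first false occurrence of clause `i`. -/
noncomputable def oc1 (hσ : ψ.Sat1in3 σ) (i : Fin m) : FO ψ σ :=
  ⟨⟨(i, fv1 ψ σ hσ i), (fv1_mem ψ σ hσ i).1⟩, (fv1_mem ψ σ hσ i).2⟩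

/-- The second false occurrence of clause `i`. -/
noncomputable def oc2 (hσ : ψ.Sat1in3 σ) (i : Fin m) : FO ψ σ :=
  ⟨⟨(i, fv2 ψ σ hσ i), (fv2_mem ψ σ hσ i).1⟩, (fv2_mem ψ σ hσ i).2⟩

/-- `succ` restricted to false occurrences. -/
def succF (hsucc : CycleData ψ succ) (o : FO ψ σ) : FO ψ σ :=
  ⟨succ o.1, by rw [hsucc.1]; exact o.2⟩

/-- Vertices of `H`: the apex and the false whites. -/
abbrev VHa : Type := Option (FO ψ σ)

/-- The nail map. -/
def nailF : VHa ψ σ → GPsiV ψ := Option.map (fun o => Sum.inl o.1)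

lemma nailF_inj : Function.Injective (nailF ψ σ) := by
  intro a b h
  cases a with
  | none => cases b with
    | none => rfl
    | some b => simp [nailF] at h
  | some a => cases b with
    | none => simp [nailF] at h
    | some b =>
      simp only [nailF, Option.map_some] at h
      have hab : a.1 = b.1 := Sum.inl.inj (Option.some.inj h)
      rw [Subtype.ext hab]

section withHyp

variable (hsucc : CycleData ψ succ) (hσ : ψ.Sat1in3 σ)

/-- Index of the edges of `H`: apex edges, cycle edges, clause edges. -/
abbrev EIdx : Type := FO ψ σ ⊕ FO ψ σ ⊕ Fin m

/-- The edges of `H` as unordered pairs. -/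
noncomputable def eMap : EIdx ψ σ → Sym2 (VHa ψ σ)
  | Sum.inl o => s(none, some o)
  | Sum.inr (Sum.inl o) => s(some o, some (succF ψ succ σ hsucc o))
  | Sum.inr (Sum.inr i) => s(some (oc1 ψ σ hσ i), some (oc2 ψ σ hσ i))

/-- The graph `H`. -/
noncomputable def HGraph : SimpleGraph (VHa ψ σ) :=
  SimpleGraph.fromEdgeSet (Set.range (eMap ψ succ σ hsucc hσ))

/-- The middle vertex of the length-2 path realizing each edge of `H`. -/
noncomputable def cMid : EIdx ψ σ → GPsiV ψ
  | Sum.inl o => some (Sum.inr (Sum.inr (o.1, true)))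
  | Sum.inr (Sum.inl o) => some (Sum.inr (Sum.inr (o.1, false)))
  | Sum.inr (Sum.inr i) => some (Sum.inr (Sum.inl i))

/-- The middle vertex, as a function of the two endpoints. -/
noncomputable def mid : VHa ψ σ → VHa ψ σ → GPsiV ψ
  | none, none => none
  | none, some o => some (Sum.inr (Sum.inr (o.1, true)))
  | some o, none => some (Sum.inr (Sum.inr (o.1, true)))
  | some a, some b =>
    if b.1 = succ a.1 then some (Sum.inr (Sum.inr (a.1, false)))
    else if a.1 = succ b.1 then some (Sum.inr (Sum.inr (b.1, false)))
    else some (Sum.inr (Sum.inl (min a.1.1.1 b.1.1.1)))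

lemma mid_symm (hsucc : CycleData ψ succ) (u v : VHa ψ σ) :
    mid ψ succ σ u v = mid ψ succ σ v u := by
  cases u with
  | none => cases v with
    | none => rfl
    | some b => rfl
  | some a => cases v with
    | none => rfl
    | some b =>
      by_cases h1 : b.1 = succ a.1
      · by_cases h2 : a.1 = succ b.1
        · exfalso
          apply (no_short ψ succ hsucc b.1).2
          rw [← h2, ← h1]
        · simp only [mid]
          exact (if_pos h1).trans ((if_neg h2).trans (if_pos h1)).symm
      · by_cases h2 : a.1 = succ b.1
        · simp only [mid]
          exact ((if_neg h1).trans (if_pos h2)).trans (if_pos h2).symm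
        · simp only [mid]
          exact ((if_neg h1).trans (if_neg h2)).trans ((congrArg
            (fun j : Fin m => (some (inr (inl j)) : GPsiV ψ)) (min_comm _ _)).trans
            ((if_neg h2).trans (if_neg h1)).symm)

/-- `cMid` is injective. -/
lemma cMid_inj : Function.Injective (cMid ψ σ) := by
  rintro (o | o | i) (o' | o' | i') h
  · have h3 := Sum.inr.inj (Sum.inr.inj (Option.some.inj h))
    rw [Subtype.ext (congrArg Prod.fst h3)]
  · exact Bool.noConfusion
      (congrArg Prod.snd (Sum.inr.inj (Sum.inr.inj (Option.some.inj h))))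
  · exact nomatch h
  · exact Bool.noConfusion
      (congrArg Prod.snd (Sum.inr.inj (Sum.inr.inj (Option.some.inj h))))
  · have h3 := Sum.inr.inj (Sum.inr.inj (Option.some.inj h))
    rw [Subtype.ext (congrArg Prod.fst h3)]
  · exact nomatch h
  · exact nomatch h
  · exact nomatch h
  · rw [Sum.inl.inj (Sum.inr.inj (Option.some.inj h))]

/-- `eMap` is injective. -/
lemma eMap_inj : Function.Injective (eMap ψ succ σ hsucc hσ) := by
  rintro (o | o | i) (o' | o' | i') h <;> simp only [eMap] at h
  · rcases (Sym2.eq_iff).mp h with ⟨-, h2⟩ | ⟨h1, -⟩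
    · rw [Option.some.inj h2]
    · exact absurd h1 (by simp)
  · rcases (Sym2.eq_iff).mp h with ⟨h1, -⟩ | ⟨h1, -⟩ <;> exact absurd h1 (by simp)
  · rcases (Sym2.eq_iff).mp h with ⟨h1, -⟩ | ⟨h1, -⟩ <;> exact absurd h1 (by simp)
  · rcases (Sym2.eq_iff).mp h with ⟨h1, -⟩ | ⟨-, h2⟩
    · exact absurd h1 (by simp)
    · exact absurd h2 (by simp)
  · rcases (Sym2.eq_iff).mp h with ⟨h1, -⟩ | ⟨h1, h2⟩
    · rw [Option.some.inj h1]
    · exfalso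
      have e1 : o.1 = succ o'.1 := congrArg Subtype.val (Option.some.inj h1)
      have e2 : succ o.1 = o'.1 := congrArg Subtype.val (Option.some.inj h2)
      apply (no_short ψ succ hsucc o'.1).2
      rw [← e1]
      exact e2
  · exfalso
    rcases (Sym2.eq_iff).mp h with ⟨h1, h2⟩ | ⟨h1, h2⟩
    · have e1 : o.1.1.2 = fv1 ψ σ hσ i' :=
        congrArg (fun z : FO ψ σ => z.1.1.2) (Option.some.inj h1)
      have e2 : (succ o.1).1.2 = fv2 ψ σ hσ i' :=
        congrArg (fun z : FO ψ σ => z.1.1.2) (Option.some.inj h2)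
      exact absurd (by rw [← e1, ← e2, hsucc.1]) (fv_spec ψ σ hσ i').1
    · have e1 : o.1.1.2 = fv2 ψ σ hσ i' :=
        congrArg (fun z : FO ψ σ => z.1.1.2) (Option.some.inj h1)
      have e2 : (succ o.1).1.2 = fv1 ψ σ hσ i' :=
        congrArg (fun z : FO ψ σ => z.1.1.2) (Option.some.inj h2)
      refine absurd ?_ (fv_spec ψ σ hσ i').1
      rw [← e1, ← e2, hsucc.1]
  · rcases (Sym2.eq_iff).mp h with ⟨h1, -⟩ | ⟨-, h2⟩
    · exact absurd h1 (by simp)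
    · exact absurd h2 (by simp)
  · exfalso
    rcases (Sym2.eq_iff).mp h with ⟨h1, h2⟩ | ⟨h1, h2⟩
    · have e1 : o'.1.1.2 = fv1 ψ σ hσ i :=
        congrArg (fun z : FO ψ σ => z.1.1.2) (Option.some.inj h1).symm
      have e2 : (succ o'.1).1.2 = fv2 ψ σ hσ i :=
        congrArg (fun z : FO ψ σ => z.1.1.2) (Option.some.inj h2).symm
      exact absurd (by rw [← e1, ← e2, hsucc.1]) (fv_spec ψ σ hσ i).1
    · have e1 : o'.1.1.2 = fv2 ψ σ hσ i :=
        congrArg (fun z : FO ψ σ => z.1.1.2) (Option.some.inj h2).symm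
      have e2 : (succ o'.1).1.2 = fv1 ψ σ hσ i :=
        congrArg (fun z : FO ψ σ => z.1.1.2) (Option.some.inj h1).symm
      refine absurd ?_ (fv_spec ψ σ hσ i).1
      rw [← e2, ← e1, hsucc.1]
  · rcases (Sym2.eq_iff).mp h with ⟨h1, -⟩ | ⟨h1, -⟩
    · have : i = i' := congrArg (fun z : FO ψ σ => z.1.1.1) (Option.some.inj h1)
      rw [this]
    · have : i = i' := congrArg (fun z : FO ψ σ => z.1.1.1) (Option.some.inj h1)
      rw [this]

/-! ### Adjacency in `G(ψ)` -/

lemma gAdj1 (o : ψ.Occ) :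
    (GPsi ψ succ).Adj none (some (inr (inr (o, true)))) := by
  exact (SimpleGraph.fromRel_adj _ _ _).mpr ⟨(fun hc => nomatch hc), Or.inl (Or.inl ⟨o, rfl, rfl⟩)⟩

lemma gAdj2 (o : ψ.Occ) :
    (GPsi ψ succ).Adj (some (inl o)) (some (inr (inr (o, true)))) := by
  exact (SimpleGraph.fromRel_adj _ _ _).mpr ⟨(fun hc => nomatch hc), Or.inl (Or.inr (Or.inl ⟨o, rfl, rfl⟩))⟩

lemma gAdj3 (o : ψ.Occ) :
    (GPsi ψ succ).Adj (some (inl o)) (some (inr (inr (o, false)))) := by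
  exact (SimpleGraph.fromRel_adj _ _ _).mpr ⟨(fun hc => nomatch hc), Or.inl (Or.inr (Or.inr (Or.inl ⟨o, rfl, rfl⟩)))⟩

lemma gAdj4 (o : ψ.Occ) :
    (GPsi ψ succ).Adj (some (inl (succ o))) (some (inr (inr (o, false)))) := by
  exact (SimpleGraph.fromRel_adj _ _ _).mpr ⟨(fun hc => nomatch hc), Or.inl (Or.inr (Or.inr (Or.inr (Or.inl ⟨o, rfl, rfl⟩))))⟩

lemma gAdj5 (o : ψ.Occ) :
    (GPsi ψ succ).Adj (some (inl o)) (some (inr (inl o.1.1))) := by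
  exact (SimpleGraph.fromRel_adj _ _ _).mpr ⟨(fun hc => nomatch hc), Or.inl (Or.inr (Or.inr (Or.inr (Or.inr ⟨o, rfl, rfl⟩))))⟩

lemma nail_adj_cMid (e : EIdx ψ σ) (x y : VHa ψ σ)
    (hxy : s(x, y) = eMap ψ succ σ hsucc hσ e) :
    (GPsi ψ succ).Adj (nailF ψ σ x) (cMid ψ σ e) := by
  cases e with
  | inl o =>
    rcases Sym2.eq_iff.mp hxy with ⟨rfl, -⟩ | ⟨rfl, -⟩
    · exact gAdj1 ψ succ o.1
    · exact gAdj2 ψ succ o.1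
  | inr e' =>
    cases e' with
    | inl o =>
      rcases Sym2.eq_iff.mp hxy with ⟨rfl, -⟩ | ⟨rfl, -⟩
      · exact gAdj3 ψ succ o.1
      · exact gAdj4 ψ succ o.1
    | inr i =>
      rcases Sym2.eq_iff.mp hxy with ⟨rfl, -⟩ | ⟨rfl, -⟩
      · exact gAdj5 ψ succ (oc1 ψ σ hσ i).1
      · exact gAdj5 ψ succ (oc2 ψ σ hσ i).1

lemma adj_decode (u v : VHa ψ σ) (h : (HGraph ψ succ σ hsucc hσ).Adj u v) :
    ∃ e, s(u, v) = eMap ψ succ σ hsucc hσ e ∧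
      mid ψ succ σ u v = cMid ψ σ e := by
  have h2 := h
  simp only [HGraph] at h2
  obtain ⟨e, he⟩ := ((SimpleGraph.fromEdgeSet_adj _).mp h2).1
  refine ⟨e, he.symm, ?_⟩
  cases e with
  | inl o =>
    rcases Sym2.eq_iff.mp he.symm with ⟨rfl, rfl⟩ | ⟨rfl, rfl⟩ <;> rfl
  | inr e' =>
    cases e' with
    | inl o =>
      rcases Sym2.eq_iff.mp he.symm with ⟨rfl, rfl⟩ | ⟨rfl, rfl⟩
      · simp only [mid]
        exact if_pos (show (succF ψ succ σ hsucc o).1 = succ o.1 from rfl)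
      · simp only [mid]
        exact (if_neg (show ¬ (o.1 = succ (succF ψ succ σ hsucc o).1) from
            fun hc => (no_short ψ succ hsucc o.1).2 hc.symm)).trans
          (if_pos (show (succF ψ succ σ hsucc o).1 = succ o.1 from rfl))
    | inr i =>
      have hc1 : ¬ ((oc2 ψ σ hσ i).1 = succ (oc1 ψ σ hσ i).1) := by
        intro hc
        have hv : (oc2 ψ σ hσ i).1.1.2 = (succ (oc1 ψ σ hσ i).1).1.2 :=
          congrArg (fun z : ψ.Occ => z.1.2) hc
        rw [hsucc.1] at hv
        exact (fv_spec ψ σ hσ i).1 hv.symm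
      have hc2 : ¬ ((oc1 ψ σ hσ i).1 = succ (oc2 ψ σ hσ i).1) := by
        intro hc
        have hv : (oc1 ψ σ hσ i).1.1.2 = (succ (oc2 ψ σ hσ i).1).1.2 :=
          congrArg (fun z : ψ.Occ => z.1.2) hc
        rw [hsucc.1] at hv
        exact (fv_spec ψ σ hσ i).1 hv
      have hmin : min ((oc1 ψ σ hσ i).1.1.1) ((oc2 ψ σ hσ i).1.1.1) = i := min_self i
      have hmin' : min ((oc2 ψ σ hσ i).1.1.1) ((oc1 ψ σ hσ i).1.1.1) = i := min_self i
      rcases Sym2.eq_iff.mp he.symm with ⟨rfl, rfl⟩ | ⟨rfl, rfl⟩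
      · simp only [mid]
        exact ((if_neg hc1).trans (if_neg hc2)).trans
          (congrArg (fun j : Fin m => (some (inr (inl j)) : GPsiV ψ)) hmin)
      · simp only [mid]
        exact ((if_neg hc2).trans (if_neg hc1)).trans
          (congrArg (fun j : Fin m => (some (inr (inl j)) : GPsiV ψ)) hmin')

lemma mid_ne_nail (u v : VHa ψ σ) (h : (HGraph ψ succ σ hsucc hσ).Adj u v)
    (x : VHa ψ σ) : mid ψ succ σ u v ≠ nailF ψ σ x := by
  obtain ⟨e, -, hm⟩ := adj_decode ψ succ σ hsucc hσ u v h
  rw [hm]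
  rcases e with o | o | i <;> cases x <;>
    exact fun hc => nomatch hc

lemma adjA (u v : VHa ψ σ) (h : (HGraph ψ succ σ hsucc hσ).Adj u v) :
    (GPsi ψ succ).Adj (nailF ψ σ u) (mid ψ succ σ u v) := by
  obtain ⟨e, he, hm⟩ := adj_decode ψ succ σ hsucc hσ u v h
  rw [hm]
  exact nail_adj_cMid ψ succ σ hsucc hσ e u v he

lemma adjB (u v : VHa ψ σ) (h : (HGraph ψ succ σ hsucc hσ).Adj u v) :
    (GPsi ψ succ).Adj (mid ψ succ σ u v) (nailF ψ σ v) := by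
  obtain ⟨e, he, hm⟩ := adj_decode ψ succ σ hsucc hσ u v h
  rw [hm]
  exact (nail_adj_cMid ψ succ σ hsucc hσ e v u (by rw [Sym2.eq_swap]; exact he)).symm

lemma mid_eq_imp (u v u' v' : VHa ψ σ) (h : (HGraph ψ succ σ hsucc hσ).Adj u v)
    (h' : (HGraph ψ succ σ hsucc hσ).Adj u' v')
    (hm : mid ψ succ σ u v = mid ψ succ σ u' v') : s(u, v) = s(u', v') := by
  obtain ⟨e, he, hme⟩ := adj_decode ψ succ σ hsucc hσ u v h
  obtain ⟨e', he', hme'⟩ := adj_decode ψ succ σ hsucc hσ u' v' h'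
  rw [hme, hme'] at hm
  rw [he, he', cMid_inj ψ σ hm]

/-! ### The subdivision model -/

lemma two_step_eq {VG : Type*} {G : SimpleGraph VG} {a b w w' : VG} (hw : w = w')
    (h1 : G.Adj a w) (h2 : G.Adj w b) (h1' : G.Adj a w') (h2' : G.Adj w' b) :
    (SimpleGraph.Walk.cons h1 (SimpleGraph.Walk.cons h2 SimpleGraph.Walk.nil) :
        G.Walk a b) =
      SimpleGraph.Walk.cons h1' (SimpleGraph.Walk.cons h2' SimpleGraph.Walk.nil) := by
  subst hw
  rfl

/-- The subdivision model of `H` in `G(ψ)`. -/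
noncomputable def theModel :
    SubdivModel (HGraph ψ succ σ hsucc hσ) (GPsi ψ succ) where
  nail := nailF ψ σ
  nail_inj := nailF_inj ψ σ
  path := fun u v h => SimpleGraph.Walk.cons (adjA ψ succ σ hsucc hσ u v h)
    (SimpleGraph.Walk.cons (adjB ψ succ σ hsucc hσ u v h) SimpleGraph.Walk.nil)
  path_isPath := by
    intro u v h
    have h1 : nailF ψ σ u ≠ mid ψ succ σ u v :=
      fun hh => mid_ne_nail ψ succ σ hsucc hσ u v h u hh.symm
    have h2 : nailF ψ σ u ≠ nailF ψ σ v := fun hh => h.ne (nailF_inj ψ σ hh)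
    have h3 : mid ψ succ σ u v ≠ nailF ψ σ v := mid_ne_nail ψ succ σ hsucc hσ u v h v
    simp [SimpleGraph.Walk.isPath_def, h1, h2, h3]
  path_symm := by
    intro u v h
    exact two_step_eq (mid_symm ψ succ σ hsucc v u) _ _ _ _
  internal_not_nail := by
    intro u v h w hw hne1 hne2 x
    have hw' : w = nailF ψ σ u ∨ w = mid ψ succ σ u v ∨ w = nailF ψ σ v := by
      simpa [SimpleGraph.Walk.support_cons, SimpleGraph.Walk.support_nil] using hw
    rcases hw' with rfl | rfl | rfl
    · exact absurd rfl hne1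
    · exact mid_ne_nail ψ succ σ hsucc hσ u v h x
    · exact absurd rfl hne2
  paths_disjoint := by
    intro u v h u' v' h' hne w hw hw'
    have hw1 : w = nailF ψ σ u ∨ w = mid ψ succ σ u v ∨ w = nailF ψ σ v := by
      simpa [SimpleGraph.Walk.support_cons, SimpleGraph.Walk.support_nil] using hw
    have hw2 : w = nailF ψ σ u' ∨ w = mid ψ succ σ u' v' ∨ w = nailF ψ σ v' := by
      simpa [SimpleGraph.Walk.support_cons, SimpleGraph.Walk.support_nil] using hw'
    have hmid1 : w ≠ mid ψ succ σ u v ∨ w ≠ mid ψ succ σ u' v' := by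
      by_contra hc
      push_neg at hc
      exact hne (mid_eq_imp ψ succ σ hsucc hσ u v u' v' h h' (hc.1 ▸ hc.2 ▸ rfl))
    constructor
    · rcases hw1 with rfl | rfl | rfl
      · exact Or.inl rfl
      · exfalso
        rcases hw2 with hh | hh | hh
        · exact mid_ne_nail ψ succ σ hsucc hσ u v h u' hh
        · rcases hmid1 with hc | hc
          · exact hc rfl
          · exact hc hh
        · exact mid_ne_nail ψ succ σ hsucc hσ u v h v' hh
      · exact Or.inr rfl
    · rcases hw2 with rfl | rfl | rfl
      · exact Or.inl rfl
      · exfalso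
        rcases hw1 with hh | hh | hh
        · exact mid_ne_nail ψ succ σ hsucc hσ u' v' h' u hh
        · rcases hmid1 with hc | hc
          · exact hc hh
          · exact hc rfl
        · exact mid_ne_nail ψ succ σ hsucc hσ u' v' h' v hh
      · exact Or.inr rfl

/-! ### Counting -/

lemma card_FO (hσ' : ψ.Sat1in3 σ) : Fintype.card (FO ψ σ) = 2 * m := by
  have eqv : FO ψ σ ≃ Σ i : Fin m, {v : Fin p // v ∈ falseSet ψ σ i} :=
    { toFun := fun o => ⟨o.1.1.1, ⟨o.1.1.2, Finset.mem_filter.mpr ⟨o.1.2, o.2⟩⟩⟩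
      invFun := fun x => ⟨⟨(x.1, x.2.1), (Finset.mem_filter.mp x.2.2).1⟩,
        (Finset.mem_filter.mp x.2.2).2⟩
      left_inv := fun o => rfl
      right_inv := fun x => rfl }
  rw [Fintype.card_congr eqv, Fintype.card_sigma]
  have hcard : ∀ i : Fin m, Fintype.card {v : Fin p // v ∈ falseSet ψ σ i} = 2 :=
    fun i => (Fintype.card_coe _).trans (falseSet_card ψ σ hσ' i)
  rw [Finset.sum_congr rfl (fun i _ => hcard i), Finset.sum_const, Finset.card_univ,
    Fintype.card_fin, smul_eq_mul]
  omega

lemma card_VHa (hσ' : ψ.Sat1in3 σ) : Nat.card (VHa ψ σ) = 2 * m + 1 := by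
  rw [Nat.card_eq_fintype_card, Fintype.card_option, card_FO ψ σ hσ']

lemma edgeSet_eq :
    (HGraph ψ succ σ hsucc hσ).edgeSet = Set.range (eMap ψ succ σ hsucc hσ) := by
  rw [HGraph, SimpleGraph.edgeSet_fromEdgeSet]
  ext e
  simp only [Set.mem_diff, Set.mem_setOf_eq, and_iff_left_iff_imp]
  rintro ⟨x, rfl⟩
  rcases x with o | o | i
  · simp [eMap, Sym2.mk_isDiag_iff]
  · simp only [eMap, Sym2.mk_isDiag_iff]
    intro hc
    exact (no_short ψ succ hsucc o.1).1
      ((congrArg Subtype.val (Option.some.inj hc)).symm)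
  · simp only [eMap, Sym2.mk_isDiag_iff]
    intro hc
    have hv : (oc1 ψ σ hσ i).1.1.2 = (oc2 ψ σ hσ i).1.1.2 :=
      congrArg (fun z : FO ψ σ => z.1.1.2) (Option.some.inj hc)
    exact (fv_spec ψ σ hσ i).1 hv

lemma edge_count : (HGraph ψ succ σ hsucc hσ).edgeSet.ncard = 5 * m := by
  rw [edgeSet_eq ψ succ σ hsucc hσ, ← Nat.card_coe_set_eq,
    Nat.card_range_of_injective (eMap_inj ψ succ σ hsucc hσ), Nat.card_eq_fintype_card]
  rw [Fintype.card_sum, Fintype.card_sum, Fintype.card_fin, card_FO ψ σ hσ]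
  omega

end withHyp

end Stmt4Aux

/-- If `ψ` has a 1-in-3 satisfying assignment, then some graph `H` with
exactly `2m+1` vertices and `5m` edges appears as a `1`-subdivision in `G(ψ)`; in
particular, `G(ψ)` has a `½`-shallow topological minor of density `5m/(2m+1)`. -/
theorem stmt_4 {p m : ℕ} (ψ : PosCnf p m) (succ : Equiv.Perm ψ.Occ)
    (hsucc : CycleData ψ succ) (hsat : ∃ σ, ψ.Sat1in3 σ) :
    (∃ (VH : Type) (H : SimpleGraph VH),
      AppearsAsSubdivision 1 H (GPsi ψ succ) ∧
      Nat.card VH = 2 * m + 1 ∧ H.edgeSet.ncard = 5 * m) ∧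
    (∃ (VH : Type) (H : SimpleGraph VH),
      IsShallowTopMinor 1 H (GPsi ψ succ) ∧
      graphDensity H = (5 * m : ℚ) / (2 * m + 1)) := by
  obtain ⟨σ, hσ⟩ := hsat
  refine ⟨⟨Stmt4Aux.VHa ψ σ, Stmt4Aux.HGraph ψ succ σ hsucc hσ,
      ⟨Stmt4Aux.theModel ψ succ σ hsucc hσ, fun u v h => rfl⟩,
      Stmt4Aux.card_VHa ψ σ hσ, Stmt4Aux.edge_count ψ succ σ hsucc hσ⟩,
    ⟨Stmt4Aux.VHa ψ σ, Stmt4Aux.HGraph ψ succ σ hsucc hσ,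
      ⟨Stmt4Aux.theModel ψ succ σ hsucc hσ, fun u v h => le_of_eq rfl⟩, ?_⟩⟩
  rw [graphDensity, Stmt4Aux.edge_count ψ succ σ hsucc hσ,
    Stmt4Aux.card_VHa ψ σ hσ]
  push_cast
  ring
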